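/- Let p be a prime, r ≥ 2, k ≥ 1, and m ≥ 1 with r(p−1)+1 < 2p^m. Then D_k(C_p^r) ≤ min{(k(r−1)+1)p − r + 1, (k−1)p^m + r(p−1) + 1}. -/

import Mathlib

open Multiset

/-- A nonempty zero-sum sequence (multiset) over `G`. -/
def IsZeroSumSeq {G : Type*} [AddCommGroup G] (S : Multiset G) : Prop :=
  S ≠ 0 ∧ S.sum = 0

/-- A minimal zero-sum sequence: nonempty, zero-sum, and with no proper
nonempty zero-sum subsequence. -/
def IsMinZeroSum {G : Type*} [AddCommGroup G] (S : Multiset G) : Prop :=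
  S ≠ 0 ∧ S.sum = 0 ∧ ∀ T : Multiset G, T ≤ S → T ≠ 0 → T.sum = 0 → T = S

/-- `ζ` is a factorization of `B` into minimal zero-sum sequences. -/
def IsFactorization {G : Type*} [AddCommGroup G] (ζ : Multiset (Multiset G))
    (B : Multiset G) : Prop :=
  ζ.sum = B ∧ ∀ A ∈ ζ, IsMinZeroSum A

/-- The set of lengths `L(B)` of factorizations of `B` into minimal zero-sum
sequences. -/
def lengthSet {G : Type*} [AddCommGroup G] (B : Multiset G) : Set ℕ :=
  { n | ∃ ζ : Multiset (Multiset G), IsFactorization ζ B ∧ Multiset.card ζ = n }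

/-- `max L(B)`, the maximal length of a factorization of `B` into minimal
zero-sum sequences. -/
noncomputable def maxL {G : Type*} [AddCommGroup G] (B : Multiset G) : ℕ :=
  sSup (lengthSet B)

/-- `S` contains `k` disjoint nonempty zero-sum subsequences. -/
def HasKDisjointZeroSum {G : Type*} [AddCommGroup G] (k : ℕ) (S : Multiset G) : Prop :=
  ∃ T : Multiset (Multiset G), Multiset.card T = k ∧
    (∀ A ∈ T, IsZeroSumSeq A) ∧ T.sum ≤ S

/-- The `k`-wise Davenport constant: the smallest `ℓ` such that every sequence
over `G` of length at least `ℓ` has `k` disjoint nonempty zero-sum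
subsequences. -/
noncomputable def Dk (G : Type*) [AddCommGroup G] (k : ℕ) : ℕ :=
  sInf { ℓ : ℕ | ∀ S : Multiset G, ℓ ≤ Multiset.card S → HasKDisjointZeroSum k S }

/-- `s_{≤ k}(G)` as an extended natural number: the smallest `m` such that every
sequence over `G` of length at least `m` has a nonempty zero-sum subsequence of
length at most `k`. -/
noncomputable def sLE (G : Type*) [AddCommGroup G] (k : ℕ) : ℕ∞ :=
  sInf { m : ℕ∞ | ∀ S : Multiset G, m ≤ (Multiset.card S : ℕ∞) →
    ∃ T ≤ S, T ≠ 0 ∧ T.sum = 0 ∧ Multiset.card T ≤ k }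

/-- `s_{≤ k}(G)` as a natural number (used when it is known to be finite). -/
noncomputable def sleN (G : Type*) [AddCommGroup G] (k : ℕ) : ℕ :=
  sInf { m : ℕ | ∀ S : Multiset G, m ≤ Multiset.card S →
    ∃ T ≤ S, T ≠ 0 ∧ T.sum = 0 ∧ Multiset.card T ≤ k }

/-- `η(G) = s_{≤ exp(G)}(G)`. -/
noncomputable def etaC (G : Type*) [AddCommGroup G] : ℕ :=
  sleN G (AddMonoid.exponent G)

namespace S8

variable (p : ℕ)
noncomputable def eA {G : Type*} [AddCommMonoid G] (g : G) :
    AddMonoidAlgebra (ZMod p) G := AddMonoidAlgebra.single g 1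
variable {G : Type*} [AddCommMonoid G]
lemma eA_add (g h : G) : eA p (g + h) = eA p g * eA p h := by
  simp [eA, AddMonoidAlgebra.single_mul_single]
lemma eA_zero : eA p (0 : G) = 1 := (AddMonoidAlgebra.one_def).symm
lemma eA_nsmul (n : ℕ) (g : G) : eA p (n • g) = eA p g ^ n := by
  simp [eA, AddMonoidAlgebra.single_pow]
lemma eA_sum {ι : Type*} (F : Finset ι) (f : ι → G) :
    eA p (∑ i ∈ F, f i) = ∏ i ∈ F, eA p (f i) := by
  classical
  induction F using Finset.induction with
  | empty => simp [eA_zero]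
  | @insert a F h ih => rw [Finset.sum_insert h, Finset.prod_insert h, eA_add, ih]
lemma charPA : CharP (AddMonoidAlgebra (ZMod p) G) p :=
  charP_of_injective_ringHom
    (f := (AddMonoidAlgebra.singleZeroRingHom : ZMod p →+* AddMonoidAlgebra (ZMod p) G))
    (fun a b hab => by
      simpa [AddMonoidAlgebra.singleZeroRingHom] using
        (Finsupp.single_injective (0 : G)) (by exact congrArg AddMonoidAlgebra.coeff hab)) p
lemma eA_sub_one_pow [Fact p.Prime] (g : G) (t : ℕ) (hg : p ^ t • g = 0) :
    (eA p g - 1) ^ p ^ t = 0 := by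
  haveI := charPA p (G := G)
  rw [sub_pow_char_pow, ← eA_nsmul, hg, eA_zero, one_pow, sub_self]

/-- Olson-type theorem: the Davenport constant of `C_p^s ⊕ C_{p^m}` is at most
`s(p-1) + p^m`. -/
theorem core [hp : Fact p.Prime] (s m : ℕ)
    (S : Multiset ((Fin s → ZMod p) × ZMod (p ^ m)))
    (hS : s * (p - 1) + p ^ m ≤ Multiset.card S) :
    ∃ T ≤ S, T ≠ 0 ∧ T.sum = 0 := by
  classical
  by_contra hcon
  push_neg at hcon
  have hp2 : 2 ≤ p := hp.out.two_le
  have hpm1 : 1 ≤ p ^ m := Nat.one_le_pow _ _ (by omega)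
  haveI : NeZero (p ^ m) := ⟨by omega⟩
  haveI : NeZero p := ⟨by omega⟩
  let R := AddMonoidAlgebra (ZMod p) ((Fin s → ZMod p) × ZMod (p ^ m))
  -- generators
  let bvec : Option (Fin s) → (Fin s → ZMod p) × ZMod (p ^ m) := fun o =>
    o.elim ((0 : Fin s → ZMod p), (1 : ZMod (p ^ m)))
      (fun i => (Pi.single i (1 : ZMod p), (0 : ZMod (p ^ m))))
  let w : Option (Fin s) → R := fun o => eA p (bvec o) - 1
  let J : Ideal R := Ideal.span (Set.range w)
  -- nilpotency of generators
  have hwn : (w none) ^ (p ^ m) = 0 := by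
    apply eA_sub_one_pow
    show (p ^ m) • ((0 : Fin s → ZMod p), (1 : ZMod (p ^ m))) = 0
    rw [Prod.smul_mk, smul_zero, nsmul_eq_mul, mul_one]
    rw [show (((p ^ m : ℕ) : ZMod (p ^ m))) = 0 by exact_mod_cast ZMod.natCast_self (p ^ m)]
    rfl
  have hws : ∀ i : Fin s, (w (some i)) ^ p = 0 := by
    intro i
    have h1 : p ^ 1 • ((Pi.single i (1 : ZMod p) : Fin s → ZMod p), (0 : ZMod (p ^ m))) = 0 := by
      rw [pow_one, Prod.smul_mk, smul_zero]
      rw [← Pi.single_smul, nsmul_eq_mul, mul_one, ZMod.natCast_self, Pi.single_zero]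
      rfl
    have h2 := eA_sub_one_pow p _ 1 h1
    rwa [pow_one] at h2
  -- membership of all eA g - 1 in J
  have hwJ : ∀ o, w o ∈ J := fun o => Ideal.subset_span ⟨o, rfl⟩
  have hdec : ∀ g : (Fin s → ZMod p) × ZMod (p ^ m),
      g = (∑ i : Fin s, (g.1 i).val • bvec (some i)) + g.2.val • bvec none := by
    intro g
    have key : ∀ i : Fin s, (g.1 i).val • (Pi.single i (1 : ZMod p) : Fin s → ZMod p)
        = Pi.single i (g.1 i) := by
      intro i
      rw [← Pi.single_smul, nsmul_eq_mul, mul_one, ZMod.natCast_val, ZMod.cast_id]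
    have term1 : ∀ i : Fin s, (g.1 i).val • bvec (some i)
        = ((Pi.single i (g.1 i) : Fin s → ZMod p), (0 : ZMod (p ^ m))) := by
      intro i
      show (g.1 i).val • ((Pi.single i (1 : ZMod p) : Fin s → ZMod p), (0 : ZMod (p ^ m))) = _
      rw [Prod.smul_mk, smul_zero, key i]
    have sum1 : (∑ i : Fin s, (g.1 i).val • bvec (some i)) = (g.1, (0 : ZMod (p ^ m))) := by
      rw [Finset.sum_congr rfl (fun i _ => term1 i)]
      apply Prod.ext
      · rw [Prod.fst_sum]
        simpa using Finset.univ_sum_single g.1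
      · rw [Prod.snd_sum]
        simp
    have term2 : g.2.val • bvec none = ((0 : Fin s → ZMod p), g.2) := by
      show g.2.val • ((0 : Fin s → ZMod p), (1 : ZMod (p ^ m))) = _
      rw [Prod.smul_mk, smul_zero, nsmul_eq_mul, mul_one, ZMod.natCast_val, ZMod.cast_id]
    rw [sum1, term2, Prod.mk_add_mk, add_zero, zero_add, Prod.mk.eta]
  have hπw : ∀ o, Ideal.Quotient.mk J (eA p (bvec o)) = 1 := by
    intro o
    have h1 : eA p (bvec o) = w o + 1 := by simp [w]
    rw [h1, _root_.map_add, map_one, Ideal.Quotient.eq_zero_iff_mem.2 (hwJ o), zero_add]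
  have hmem : ∀ g : (Fin s → ZMod p) × ZMod (p ^ m), eA p g - 1 ∈ J := by
    intro g
    rw [← Ideal.Quotient.eq_zero_iff_mem, _root_.map_sub, map_one, sub_eq_zero]
    conv_lhs => rw [hdec g]
    rw [eA_add, _root_.map_mul, eA_sum, map_prod, eA_nsmul, map_pow, hπw, one_pow, mul_one]
    exact Finset.prod_eq_one fun i _ => by rw [eA_nsmul, map_pow, hπw, one_pow]
  -- the ideal power vanishes
  let mono : (Option (Fin s) → ℕ) → R := fun α => ∏ o, w o ^ α o
  let K : ℕ → Ideal R := fun n => Ideal.span (mono '' {α | ∑ o, α o = n})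
  have hJK : ∀ n, J ^ n ≤ K n := by
    intro n
    induction n with
    | zero =>
      rw [pow_zero, Ideal.one_eq_top]
      have h1 : (1 : R) ∈ K 0 :=
        Ideal.subset_span ⟨fun _ => 0, by simp, by simp [mono]⟩
      exact le_of_eq ((Ideal.eq_top_iff_one (K 0)).2 h1).symm
    | succ n ih =>
      rw [pow_succ]
      refine le_trans (Ideal.mul_mono_left ih) ?_
      rw [show K n * J = Ideal.span _ from Ideal.span_mul_span _ _]
      rw [Ideal.span_le]
      rintro x hx
      rw [Set.mem_mul] at hx
      obtain ⟨a, ⟨α, hα, rfl⟩, b, ⟨o, rfl⟩, hx⟩ := hx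
      subst hx
      have hprod : mono α * w o = mono (Function.update α o (α o + 1)) := by
        rw [show mono (Function.update α o (α o + 1)) =
            ∏ j, w j ^ (Function.update α o (α o + 1) j) from rfl]
        rw [show (fun j => w j ^ Function.update α o (α o + 1) j)
            = fun j => Function.update (fun j' => w j' ^ α j') o (w o ^ (α o + 1)) j from ?_]
        · rw [Finset.prod_update_of_mem (Finset.mem_univ o)]
          rw [show mono α = ∏ j, w j ^ α j from rfl]
          rw [← Finset.mul_prod_erase Finset.univ _ (Finset.mem_univ o), Finset.erase_eq,
            pow_succ]
          ring
        · funext j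
          by_cases hj : j = o
          · subst hj; simp
          · rw [Function.update_of_ne hj, Function.update_of_ne hj]
      rw [hprod]
      apply Ideal.subset_span
      refine ⟨Function.update α o (α o + 1), ?_, rfl⟩
      have h2 : (∑ j, Function.update α o (α o + 1) j)
          = (α o + 1) + ∑ j ∈ Finset.univ \ {o}, α j :=
        Finset.sum_update_of_mem (Finset.mem_univ o) _ _
      have h3 : (∑ j, α j) = α o + ∑ j ∈ Finset.univ \ {o}, α j := by
        rw [← Finset.erase_eq, Finset.add_sum_erase _ _ (Finset.mem_univ o)]
      simp only [Set.mem_setOf_eq] at hα ⊢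
      omega
  have hKN : K (s * (p - 1) + p ^ m) = ⊥ := by
    rw [Ideal.span_eq_bot]
    rintro x ⟨α, hα, rfl⟩
    simp only [Set.mem_setOf_eq] at hα
    by_cases hcase : ∃ i : Fin s, p ≤ α (some i)
    · obtain ⟨i, hi⟩ := hcase
      apply Finset.prod_eq_zero (Finset.mem_univ (some i))
      rw [show α (some i) = p + (α (some i) - p) by omega, pow_add, hws i, zero_mul]
    · push_neg at hcase
      have hsum : ∑ i : Fin s, α (some i) ≤ s * (p - 1) := by
        calc ∑ i : Fin s, α (some i) ≤ ∑ _i : Fin s, (p - 1) :=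
              Finset.sum_le_sum fun i _ => by have := hcase i; omega
          _ = s * (p - 1) := by simp [Finset.sum_const, mul_comm]
      have hnone : p ^ m ≤ α none := by
        by_contra hn
        push_neg at hn
        rw [Fintype.sum_option] at hα
        omega
      apply Finset.prod_eq_zero (Finset.mem_univ none)
      rw [show α none = p ^ m + (α none - p ^ m) by omega, pow_add, hwn, zero_mul]
  -- enumerate S by a list
  obtain ⟨l, hl⟩ : ∃ l : List ((Fin s → ZMod p) × ZMod (p ^ m)), S = ↑l :=
    ⟨S.toList, (Multiset.coe_toList S).symm⟩
  have hcard : Multiset.card S = l.length := by rw [hl]; exact Multiset.coe_card l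
  set n := l.length with hn
  have hP : (∏ i : Fin n, (eA p (l.get i) - 1)) = 0 := by
    have h1 : ∀ F : Finset (Fin n), (∏ i ∈ F, (eA p (l.get i) - 1)) ∈ J ^ F.card := by
      intro F
      induction F using Finset.induction with
      | empty => simp
      | @insert a F ha ih =>
        rw [Finset.prod_insert ha, Finset.card_insert_of_notMem ha, pow_succ']
        exact Ideal.mul_mem_mul (hmem _) ih
    have h2 : (∏ i : Fin n, (eA p (l.get i) - 1)) ∈ J ^ n := by
      simpa using h1 Finset.univ
    have h3 : J ^ n ≤ ⊥ :=
      le_trans (Ideal.pow_le_pow_right (by omega)) (le_trans (hJK _) (le_of_eq hKN))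
    exact (Submodule.mem_bot R).1 (h3 h2)
  -- expansion
  have hneg : (-1 : R) = AddMonoidAlgebra.single (0 : (Fin s → ZMod p) × ZMod (p ^ m))
      (-1 : ZMod p) := by
    rw [show ((1 : R) = AddMonoidAlgebra.single (0 : (Fin s → ZMod p) × ZMod (p ^ m)) 1)
      from AddMonoidAlgebra.one_def]
    exact (AddMonoidAlgebra.single_neg 0 1).symm
  have hzero : (0 : R) = ∑ t ∈ (Finset.univ : Finset (Fin n)).powerset,
      AddMonoidAlgebra.single (∑ i ∈ t, l.get i)
        ((-1 : ZMod p) ^ (Finset.univ \ t).card) := by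
    calc (0 : R) = ∏ i : Fin n, (eA p (l.get i) - 1) := hP.symm
      _ = ∏ i : Fin n, (eA p (l.get i) + (-1)) := by
          refine Finset.prod_congr rfl fun i _ => by rw [sub_eq_add_neg]
      _ = ∑ t ∈ (Finset.univ : Finset (Fin n)).powerset,
            (∏ i ∈ t, eA p (l.get i)) * ∏ _i ∈ Finset.univ \ t, (-1 : R) :=
          Finset.prod_add _ _ _
      _ = _ := by
          refine Finset.sum_congr rfl fun t _ => ?_
          rw [← eA_sum, Finset.prod_const, hneg, AddMonoidAlgebra.single_pow]
          rw [show eA p (∑ i ∈ t, l.get i)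
            = AddMonoidAlgebra.single (∑ i ∈ t, l.get i) (1 : ZMod p) from rfl]
          rw [AddMonoidAlgebra.single_mul_single, smul_zero, add_zero, one_mul]
  have hcoeff := congrArg ((Finsupp.applyAddHom
    (0 : (Fin s → ZMod p) × ZMod (p ^ m))).comp
      (AddMonoidAlgebra.coeffAddEquiv : R ≃+ _).toAddMonoidHom) hzero
  rw [map_sum] at hcoeff
  simp only [AddMonoidHom.comp_apply, Finsupp.applyAddHom_apply, _root_.map_zero] at hcoeff
  have hsingle : ∀ (x : (Fin s → ZMod p) × ZMod (p ^ m)) (c : ZMod p),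
      (AddMonoidAlgebra.coeffAddEquiv (R := ZMod p)).toAddMonoidHom
        (AddMonoidAlgebra.single x c) 0 = if x = 0 then c else 0 := by
    intro x c
    exact Finsupp.single_apply
  rw [Finset.sum_congr rfl (fun t _ => hsingle _ _)] at hcoeff
  -- identify S with the image of univ
  have huniv : Multiset.map l.get (Finset.univ : Finset (Fin n)).val
      = (↑l : Multiset ((Fin s → ZMod p) × ZMod (p ^ m))) := by
    rw [Fin.univ_def]
    show Multiset.map l.get (↑(List.finRange n)) = _
    rw [Multiset.map_coe, List.map_get_finRange]
  -- every nonempty subset contributes zero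
  have hterm : ∀ t ∈ (Finset.univ : Finset (Fin n)).powerset,
      t ≠ (∅ : Finset (Fin n)) →
      (if (∑ i ∈ t, l.get i) = 0 then (-1 : ZMod p) ^ (Finset.univ \ t).card else 0) = 0 := by
    intro t _ htne
    have hle : Multiset.map l.get t.val ≤ S := by
      rw [hl, ← huniv]
      exact Multiset.map_le_map (Finset.val_le_iff.2 (Finset.subset_univ t))
    have hne : Multiset.map l.get t.val ≠ 0 := by
      intro h0
      apply htne
      have := congrArg Multiset.card h0
      simp only [Multiset.card_map, Multiset.card_zero] at this
      exact Finset.card_eq_zero.1 this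
    have := hcon _ hle hne
    rw [show (Multiset.map l.get t.val).sum = ∑ i ∈ t, l.get i from rfl] at this
    rw [if_neg this]
  rw [Finset.sum_eq_single_of_mem ∅ (Finset.mem_powerset.2 (Finset.empty_subset _)) hterm]
    at hcoeff
  simp only [Finset.sum_empty, if_pos rfl, Finset.sdiff_empty, Finset.card_univ,
    Fintype.card_fin] at hcoeff
  haveI : Nontrivial (ZMod p) := by
    have : Fact (1 < p) := ⟨by omega⟩
    infer_instance
  exact (IsUnit.ne_zero ((isUnit_one.neg).pow n)) hcoeff.symm



lemma exists_le_card {α : Type*} (S : Multiset α) (n : ℕ) (h : n ≤ Multiset.card S) :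
    ∃ T ≤ S, Multiset.card T = n := by
  refine ⟨↑(S.toList.take n), ?_, ?_⟩
  · calc (↑(S.toList.take n) : Multiset α) ≤ ↑S.toList :=
        (List.take_sublist n S.toList).subperm
      _ = S := Multiset.coe_toList S
  · rw [Multiset.coe_card, List.length_take]
    have : S.toList.length = Multiset.card S := Multiset.length_toList S
    omega

lemma sub_sum {G : Type*} [AddCommGroup G] [DecidableEq G] {I J : Multiset G} (h : J ≤ I)
    (hI : I.sum = 0) (hJ : J.sum = 0) : (I - J).sum = 0 := by
  have h1 : I - J + J = I := tsub_add_cancel_of_le h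
  have h2 := congrArg Multiset.sum h1
  rw [Multiset.sum_add, hJ, add_zero] at h2
  rw [h2, hI]

lemma card_sub' {α : Type*} [DecidableEq α] {I J : Multiset α} (h : J ≤ I) :
    Multiset.card (I - J) + Multiset.card J = Multiset.card I := by
  rw [← Multiset.card_add, tsub_add_cancel_of_le h]

variable (p : ℕ)


/-- Davenport bound for elementary abelian `p`-groups (Chevalley–Warning / Olson). -/
theorem dav [Fact p.Prime] (s : ℕ) (S : Multiset (Fin s → ZMod p))
    (hS : s * (p - 1) + 1 ≤ Multiset.card S) : ∃ T ≤ S, T ≠ 0 ∧ T.sum = 0 := by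
  have h0 : s * (p - 1) + p ^ 0 ≤ Multiset.card
      (S.map (fun g => (g, (0 : ZMod (p ^ 0))))) := by simpa using hS
  obtain ⟨T', hT'le, hT'ne, hT'sum⟩ := core p s 0 _ h0
  refine ⟨T'.map Prod.fst, ?_, ?_, ?_⟩
  · have h1 := Multiset.map_le_map (f := Prod.fst) hT'le
    rwa [Multiset.map_map,
      show (Prod.fst ∘ fun g : (Fin s → ZMod p) => (g, (0 : ZMod (p ^ 0)))) = id from rfl,
      Multiset.map_id] at h1
  · intro h0'
    apply hT'ne
    rw [← Multiset.card_eq_zero]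
    have := congrArg Multiset.card h0'
    simpa only [Multiset.card_map, Multiset.card_zero] using this
  · have h1 := AddMonoidHom.map_multiset_sum
      (AddMonoidHom.fst (Fin s → ZMod p) (ZMod (p ^ 0))) T'
    rw [hT'sum] at h1
    simpa only [AddMonoidHom.coe_fst, Prod.fst_zero] using h1.symm

theorem dav_card [Fact p.Prime] (s : ℕ) (S : Multiset (Fin s → ZMod p))
    (hS : s * (p - 1) + 1 ≤ Multiset.card S) :
    ∃ T ≤ S, T ≠ 0 ∧ T.sum = 0 ∧ Multiset.card T ≤ s * (p - 1) + 1 := by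
  obtain ⟨S₀, hle, hcard⟩ := exists_le_card S (s * (p - 1) + 1) hS
  obtain ⟨T, h1, h2, h3⟩ := dav p s S₀ (le_of_eq hcard.symm)
  exact ⟨T, le_trans h1 hle, h2, h3, hcard ▸ Multiset.card_le_card h1⟩

/-- Lifting lemma: a zero-sum subsequence whose length is divisible by `p^m'`
and bounded by `r(p-1) + p^m'`. -/
theorem lifted [Fact p.Prime] (r m' : ℕ) (S : Multiset (Fin r → ZMod p))
    (hS : r * (p - 1) + p ^ m' ≤ Multiset.card S) :
    ∃ I ≤ S, I ≠ 0 ∧ I.sum = 0 ∧ p ^ m' ∣ Multiset.card I ∧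
      Multiset.card I ≤ r * (p - 1) + p ^ m' := by
  have hp2 : 2 ≤ p := (Fact.out : p.Prime).two_le
  haveI : NeZero (p ^ m') := ⟨by positivity⟩
  obtain ⟨S₀, hle, hcard⟩ := exists_le_card S (r * (p - 1) + p ^ m') hS
  obtain ⟨T', h1, h2, h3⟩ := core p r m'
    (S₀.map (fun g => (g, (1 : ZMod (p ^ m')))))
    (by rw [Multiset.card_map, hcard])
  set f : (Fin r → ZMod p) → (Fin r → ZMod p) × ZMod (p ^ m') := fun g => (g, 1) with hf
  set I : Multiset (Fin r → ZMod p) := T'.map Prod.fst with hI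
  have hIf : T' = I.map f := by
    rw [hI, Multiset.map_map]
    have : ∀ x ∈ T', (f ∘ Prod.fst) x = id x := by
      intro x hx
      have hx' := Multiset.mem_of_le h1 hx
      obtain ⟨g, _, rfl⟩ := Multiset.mem_map.1 hx'
      rfl
    rw [Multiset.map_congr rfl this, Multiset.map_id]
  have hIle : I ≤ S₀ := by
    have h4 := Multiset.map_le_map (f := Prod.fst) h1
    rwa [Multiset.map_map,
      show (Prod.fst ∘ fun g : (Fin r → ZMod p) => (g, (1 : ZMod (p ^ m')))) = id from rfl,
      Multiset.map_id] at h4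
  have hcardI : Multiset.card I = Multiset.card T' := by rw [hI, Multiset.card_map]
  have hsumfst : I.sum = 0 := by
    have h5 := AddMonoidHom.map_multiset_sum
      (AddMonoidHom.fst (Fin r → ZMod p) (ZMod (p ^ m'))) T'
    rw [h3] at h5
    simpa [hI] using h5.symm
  have hsumsnd : ((Multiset.card I : ℕ) : ZMod (p ^ m')) = 0 := by
    have h5 := AddMonoidHom.map_multiset_sum
      (AddMonoidHom.snd (Fin r → ZMod p) (ZMod (p ^ m'))) T'
    rw [h3] at h5
    have h6 : Multiset.map (⇑(AddMonoidHom.snd (Fin r → ZMod p) (ZMod (p ^ m')))) T'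
        = Multiset.map (fun _ => (1 : ZMod (p ^ m'))) I := by
      conv_lhs => rw [hIf]
      rw [Multiset.map_map]
      rfl
    rw [h6, Multiset.map_const', Multiset.sum_replicate, _root_.map_zero] at h5
    rw [nsmul_eq_mul, mul_one] at h5
    exact h5.symm
  refine ⟨I, le_trans hIle hle, ?_, hsumfst, ?_, ?_⟩
  · intro h0'
    apply h2
    rw [hIf, h0', Multiset.map_zero]
  · rwa [ZMod.natCast_eq_zero_iff] at hsumsnd
  · rw [hcardI, ← hcard]
    calc Multiset.card T' ≤ Multiset.card (Multiset.map f S₀) := Multiset.card_le_card h1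
      _ = Multiset.card S₀ := Multiset.card_map f S₀

/-- Extraction of a zero-sum subsequence of length at most `(r-1)p`. -/
theorem extract1 [Fact p.Prime] (r : ℕ) (hr : 2 ≤ r) (S : Multiset (Fin r → ZMod p))
    (hS : r * (p - 1) + p ≤ Multiset.card S) :
    ∃ T ≤ S, T ≠ 0 ∧ T.sum = 0 ∧ Multiset.card T ≤ (r - 1) * p := by
  classical
  have hp2 : 2 ≤ p := (Fact.out : p.Prime).two_le
  have h1 : r * (p - 1) + p ^ 1 ≤ Multiset.card S := by simpa using hS
  obtain ⟨I, hIle, hIne, hIsum, ⟨t, ht⟩, hIbd⟩ := lifted p r 1 S h1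
  rw [pow_one] at ht hIbd
  by_cases hcase : Multiset.card I ≤ (r - 1) * p
  · exact ⟨I, hIle, hIne, hIsum, hcase⟩
  push_neg at hcase
  have e1 : r * p = r * (p - 1) + r := by
    calc r * p = r * ((p - 1) + 1) := by rw [Nat.sub_add_cancel (by omega : 1 ≤ p)]
      _ = r * (p - 1) + r := by rw [mul_add, mul_one]
  have e2 : r * p = (r - 1) * p + p := by
    calc r * p = ((r - 1) + 1) * p := by rw [Nat.sub_add_cancel (by omega : 1 ≤ r)]
      _ = (r - 1) * p + p := by rw [add_mul, one_mul]
  have hcardI : Multiset.card I = r * p := by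
    have htr : r ≤ t := by
      by_contra hh
      push_neg at hh
      have h5 : p * t ≤ p * (r - 1) := Nat.mul_le_mul_left p (by omega)
      rw [mul_comm p (r - 1)] at h5
      omega
    have htr2 : t ≤ r := by
      by_contra hh
      push_neg at hh
      have h5 : p * (r + 1) ≤ p * t := Nat.mul_le_mul_left p hh
      have h6 : p * (r + 1) = p * r + p := by rw [mul_add, mul_one]
      rw [mul_comm p r] at h6
      omega
    have : t = r := le_antisymm htr2 htr
    rw [ht, this, mul_comm]
  obtain ⟨I₀, hI₀le, hI₀card⟩ := exists_le_card I (r * (p - 1) + 1) (by omega)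
  obtain ⟨J, hJle, hJne, hJsum, hJbd⟩ := dav_card p r I₀ (le_of_eq hI₀card.symm)
  have hJI : J ≤ I := le_trans hJle hI₀le
  by_cases hJc : Multiset.card J ≤ (r - 1) * p
  · exact ⟨J, le_trans hJI hIle, hJne, hJsum, hJc⟩
  push_neg at hJc
  have hcs := card_sub' hJI
  refine ⟨I - J, le_trans (tsub_le_self) hIle, ?_, sub_sum hJI hIsum hJsum, ?_⟩
  · intro h0'
    have := congrArg Multiset.card h0'
    rw [Multiset.card_zero] at this
    omega
  · have h7 : p ≤ (r - 1) * p := Nat.le_mul_of_pos_left p (by omega)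
    omega

/-- Extraction of a zero-sum subsequence of length at most `p^m`. -/
theorem extract2 [Fact p.Prime] (r m : ℕ) (hr : 2 ≤ r)
    (hlt : r * (p - 1) + 1 < 2 * p ^ m) (S : Multiset (Fin r → ZMod p))
    (hS : r * (p - 1) + p ^ m ≤ Multiset.card S) :
    ∃ T ≤ S, T ≠ 0 ∧ T.sum = 0 ∧ Multiset.card T ≤ p ^ m := by
  classical
  have hp2 : 2 ≤ p := (Fact.out : p.Prime).two_le
  have hq1 : 1 ≤ p ^ m := Nat.one_le_pow _ _ (by omega)
  obtain ⟨I, hIle, hIne, hIsum, ⟨t, ht⟩, hIbd⟩ := lifted p r m S hS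
  by_cases hcase : Multiset.card I ≤ p ^ m
  · exact ⟨I, hIle, hIne, hIsum, hcase⟩
  push_neg at hcase
  have hcardI : Multiset.card I = 2 * p ^ m := by
    have ht2 : 2 ≤ t := by
      by_contra hh
      push_neg at hh
      interval_cases t <;> omega
    have ht3 : t < 3 := by
      by_contra hh
      push_neg at hh
      have h5 : p ^ m * 3 ≤ p ^ m * t := Nat.mul_le_mul_left _ hh
      omega
    have : t = 2 := by omega
    rw [ht, this, mul_comm]
  obtain ⟨I₀, hI₀le, hI₀card⟩ := exists_le_card I (r * (p - 1) + 1) (by omega)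
  obtain ⟨J, hJle, hJne, hJsum, hJbd⟩ := dav_card p r I₀ (le_of_eq hI₀card.symm)
  have hJI : J ≤ I := le_trans hJle hI₀le
  by_cases hJc : Multiset.card J ≤ p ^ m
  · exact ⟨J, le_trans hJI hIle, hJne, hJsum, hJc⟩
  push_neg at hJc
  have hcs := card_sub' hJI
  refine ⟨I - J, le_trans (tsub_le_self) hIle, ?_, sub_sum hJI hIsum hJsum, ?_⟩
  · intro h0'
    have := congrArg Multiset.card h0'
    rw [Multiset.card_zero] at this
    omega
  · omega


theorem build {G : Type*} [AddCommGroup G] [DecidableEq G] (b e : ℕ)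
    (hbase : ∀ S : Multiset G, b ≤ Multiset.card S → ∃ T ≤ S, T ≠ 0 ∧ T.sum = 0)
    (hext : ∀ S : Multiset G, b + e ≤ Multiset.card S →
      ∃ T ≤ S, T ≠ 0 ∧ T.sum = 0 ∧ Multiset.card T ≤ e) :
    ∀ k, 1 ≤ k → ∀ S : Multiset G, b + (k - 1) * e ≤ Multiset.card S →
      HasKDisjointZeroSum k S := by
  intro k hk
  induction k, hk using Nat.le_induction with
  | base =>
    intro S hS
    obtain ⟨T, hle, hne, hsum⟩ := hbase S (by simpa using hS)
    exact ⟨{T}, by simp, by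
      intro A hA
      rw [Multiset.mem_singleton] at hA
      subst hA
      exact ⟨hne, hsum⟩, by simpa using hle⟩
  | succ k hk ih =>
    intro S hS
    have he : (k - 1) * e + e = k * e := by
      conv_rhs => rw [show k = k - 1 + 1 by omega]
      rw [add_mul, one_mul]
    have h1 : b + e ≤ Multiset.card S := by
      have h2 : e ≤ k * e := Nat.le_mul_of_pos_left e (by omega)
      simp only [Nat.add_sub_cancel] at hS
      omega
    obtain ⟨T, hTle, hTne, hTsum, hTcard⟩ := hext S h1
    have hc : Multiset.card (S - T) + Multiset.card T = Multiset.card S := by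
      rw [← Multiset.card_add, tsub_add_cancel_of_le hTle]
    have h3 : b + (k - 1) * e ≤ Multiset.card (S - T) := by
      simp only [Nat.add_sub_cancel] at hS
      omega
    obtain ⟨𝒯, h𝒯card, h𝒯zs, h𝒯sum⟩ := ih (S - T) h3
    refine ⟨T ::ₘ 𝒯, by simp [h𝒯card], ?_, ?_⟩
    · intro A hA
      rcases Multiset.mem_cons.1 hA with rfl | hA'
      · exact ⟨hTne, hTsum⟩
      · exact h𝒯zs A hA'
    · rw [Multiset.sum_cons]
      calc T + 𝒯.sum ≤ T + (S - T) := add_le_add_right h𝒯sum T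
        _ = S := by rw [add_comm, tsub_add_cancel_of_le hTle]


end S8

theorem statement8 (p r k m : ℕ) [Fact p.Prime] (hr : 2 ≤ r) (hk : 1 ≤ k)
    (hm : 1 ≤ m) (h : r * (p - 1) + 1 < 2 * p ^ m) :
    Dk (Fin r → ZMod p) k ≤
      min ((k * (r - 1) + 1) * p - r + 1) ((k - 1) * p ^ m + r * (p - 1) + 1) := by
  classical
  have hp2 : 2 ≤ p := (Fact.out : p.Prime).two_le
  have hpm1 : 1 ≤ p ^ m := Nat.one_le_pow _ _ (by omega)
  refine le_min ?_ ?_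
  · -- first bound
    apply Nat.sInf_le
    intro S hS
    have hle : r ≤ (k * (r - 1) + 1) * p := by
      have h1 : r ≤ k * (r - 1) + 1 := by
        have h2 : r - 1 ≤ k * (r - 1) := Nat.le_mul_of_pos_left _ (by omega)
        omega
      calc r ≤ (k * (r - 1) + 1) * 1 := by omega
        _ ≤ (k * (r - 1) + 1) * p := Nat.mul_le_mul_left _ (by omega)
    have harith : (k * (r - 1) + 1) * p - r + 1
        = r * (p - 1) + 1 + (k - 1) * ((r - 1) * p) := by
      zify [hle, (show 1 ≤ p by omega), hk, (show 1 ≤ r by omega)]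
      ring
    rw [harith] at hS
    refine S8.build (r * (p - 1) + 1) ((r - 1) * p)
      (fun S' hS' => S8.dav p r S' hS')
      (fun S' hS' => S8.extract1 p r hr S' ?_) k hk S hS
    have h3 : p ≤ (r - 1) * p := Nat.le_mul_of_pos_left p (by omega)
    omega
  · -- second bound
    apply Nat.sInf_le
    intro S hS
    have harith : (k - 1) * p ^ m + r * (p - 1) + 1
        = r * (p - 1) + 1 + (k - 1) * p ^ m := by ring
    rw [harith] at hS
    refine S8.build (r * (p - 1) + 1) (p ^ m)
      (fun S' hS' => S8.dav p r S' hS')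
      (fun S' hS' => S8.extract2 p r m hr h S' (by omega)) k hk S hS
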